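/- Let (x₁, y₁, x₂, y₂, Γ, σ) : [0, ∞) → ℝ⁶ be a differentiable solution of the soliton system that converges, as t → ∞, to the Ricci-flat cone fixed point rfc = (n−1, 0, n−1, 0, −n, 0). Then σ(t) = 0 and J(t) = 0 for all t ≥ 0. In particular, the stable set of rfc is contained in the joint zero set of σ and J. -/

import Mathlib

lemma decay_zero (f : ℝ → ℝ) (hf : ∀ t, 0 ≤ t → HasDerivAt f (2 * f t) t)
    (hlim : Filter.Tendsto f Filter.atTop (nhds 0)) : ∀ t, 0 ≤ t → f t = 0 := by
  have key : ∀ t, 0 ≤ t → f t * Real.exp (-(2 * t)) = f 0 := by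
    intro t ht
    have hg : ∀ s, 0 ≤ s →
        HasDerivAt (fun s => f s * Real.exp (-(2 * s))) 0 s := by
      intro s hs
      have h0 : HasDerivAt (fun s : ℝ => -(2 * s)) (-2) s := by
        simpa using ((hasDerivAt_id s).const_mul (-2 : ℝ))
      have h1 := h0.exp
      have h2 := (hf s hs).mul h1
      have h3 : 2 * f s * Real.exp (-(2 * s)) + f s * (Real.exp (-(2 * s)) * (-2)) = 0 := by
        ring
      have h4 : HasDerivAt (fun s => f s * Real.exp (-(2 * s)))
          (2 * f s * Real.exp (-(2 * s)) + f s * (Real.exp (-(2 * s)) * (-2))) s := h2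
      rw [h3] at h4
      exact h4
    have hc : ContinuousOn (fun s => f s * Real.exp (-(2 * s))) (Set.Icc 0 t) := by
      intro s hs
      exact ((hg s hs.1).continuousAt).continuousWithinAt
    have hd : ∀ s ∈ Set.Ico 0 t,
        HasDerivWithinAt (fun s => f s * Real.exp (-(2 * s))) 0 (Set.Ici s) s :=
      fun s hs => (hg s hs.1).hasDerivWithinAt
    have := constant_of_has_deriv_right_zero hc hd t (Set.mem_Icc.mpr ⟨ht, le_refl t⟩)
    simpa using this
  have hexp : Filter.Tendsto (fun t : ℝ => Real.exp (-(2 * t))) Filter.atTop (nhds 0) := by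
    apply Real.tendsto_exp_atBot.comp
    apply Filter.tendsto_neg_atBot_iff.mpr
    exact Filter.Tendsto.const_mul_atTop two_pos Filter.tendsto_id
  have h0 : f 0 = 0 := by
    have ht : Filter.Tendsto (fun t => f t * Real.exp (-(2 * t))) Filter.atTop (nhds 0) := by
      simpa using hlim.mul hexp
    have ht' : Filter.Tendsto (fun _ : ℝ => f 0) Filter.atTop (nhds 0) := by
      apply ht.congr'
      filter_upwards [Filter.eventually_ge_atTop (0 : ℝ)] with t htt
      exact key t htt
    exact tendsto_nhds_unique tendsto_const_nhds ht'
  intro t ht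
  have := key t ht
  rw [h0] at this
  have hne : Real.exp (-(2 * t)) ≠ 0 := (Real.exp_pos _).ne'
  exact (mul_eq_zero.mp this).resolve_right hne

/-- Any solution of the soliton system on `[0,∞)` that converges
as `t → ∞` to the Ricci-flat cone fixed point `rfc = (n−1, 0, n−1, 0, −n, 0)`
satisfies `σ(t) = 0` and `J(t) = 0` for all `t ≥ 0`; in particular the stable set of
`rfc` lies in the joint zero set of `σ` and `J`. -/
theorem stable_set_of_rfc_in_zero_set_of_sigma_and_J
    (p₁ p₂ : ℤ) (hp₁ : 2 ≤ p₁) (hp₂ : 2 ≤ p₂) (lam : ℝ)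
    (n : ℝ) (hn : n = (p₁ : ℝ) + (p₂ : ℝ))
    (x₁ y₁ x₂ y₂ Γ σ : ℝ → ℝ)
    (hx₁ : ∀ t, 0 ≤ t → HasDerivAt x₁ (-2 * x₁ t * y₁ t) t)
    (hy₁ : ∀ t, 0 ≤ t → HasDerivAt y₁ (x₁ t + (Γ t + 1 - lam * σ t) * y₁ t + Γ t + 1) t)
    (hx₂ : ∀ t, 0 ≤ t → HasDerivAt x₂ (-2 * x₂ t * y₂ t) t)
    (hy₂ : ∀ t, 0 ≤ t → HasDerivAt y₂ (x₂ t + (Γ t + 1 - lam * σ t) * y₂ t + Γ t + 1) t)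
    (hΓ : ∀ t, 0 ≤ t → HasDerivAt Γ
      (Γ t + (p₁ : ℝ) * (1 + y₁ t) ^ 2 + (p₂ : ℝ) * (1 + y₂ t) ^ 2) t)
    (hσ : ∀ t, 0 ≤ t → HasDerivAt σ (2 * σ t) t)
    (hlim₁ : Filter.Tendsto x₁ Filter.atTop (nhds (n - 1)))
    (hlim₂ : Filter.Tendsto y₁ Filter.atTop (nhds 0))
    (hlim₃ : Filter.Tendsto x₂ Filter.atTop (nhds (n - 1)))
    (hlim₄ : Filter.Tendsto y₂ Filter.atTop (nhds 0))
    (hlim₅ : Filter.Tendsto Γ Filter.atTop (nhds (-n)))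
    (hlim₆ : Filter.Tendsto σ Filter.atTop (nhds 0)) :
    ∀ t, 0 ≤ t → σ t = 0 ∧
      (1 / 2) * ((p₁ : ℝ) * (x₁ t + (1 + y₁ t) ^ 2) + (p₂ : ℝ) * (x₂ t + (1 + y₂ t) ^ 2))
        - (1 / 2) * (Γ t) ^ 2 = 0 := by
  have hσ0 : ∀ t, 0 ≤ t → σ t = 0 := decay_zero σ hσ hlim₆
  set J : ℝ → ℝ := fun t =>
    (1 / 2) * ((p₁ : ℝ) * (x₁ t + (1 + y₁ t) ^ 2) + (p₂ : ℝ) * (x₂ t + (1 + y₂ t) ^ 2))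
      - (1 / 2) * (Γ t) ^ 2 with hJ
  have hJderiv : ∀ t, 0 ≤ t → HasDerivAt J (2 * J t) t := by
    intro t ht
    have hy₁' : HasDerivAt y₁ (x₁ t + (Γ t + 1) * y₁ t + Γ t + 1) t := by
      have := hy₁ t ht
      rw [hσ0 t ht] at this
      simpa using this
    have hy₂' : HasDerivAt y₂ (x₂ t + (Γ t + 1) * y₂ t + Γ t + 1) t := by
      have := hy₂ t ht
      rw [hσ0 t ht] at this
      simpa using this
    have hq₁ : HasDerivAt (fun s => (1 + y₁ s) ^ 2)
        (2 * (1 + y₁ t) ^ 1 * (x₁ t + (Γ t + 1) * y₁ t + Γ t + 1)) t :=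
      by simpa using ((hasDerivAt_const t (1:ℝ)).fun_add hy₁').fun_pow 2
    have hq₂ : HasDerivAt (fun s => (1 + y₂ s) ^ 2)
        (2 * (1 + y₂ t) ^ 1 * (x₂ t + (Γ t + 1) * y₂ t + Γ t + 1)) t :=
      by simpa using ((hasDerivAt_const t (1:ℝ)).fun_add hy₂').fun_pow 2
    have hΓ2 : HasDerivAt (fun s => (Γ s) ^ 2)
        (2 * (Γ t) ^ 1 * (Γ t + (p₁ : ℝ) * (1 + y₁ t) ^ 2 + (p₂ : ℝ) * (1 + y₂ t) ^ 2)) t :=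
      by simpa using (hΓ t ht).fun_pow 2
    have hsum : HasDerivAt J
        ((1 / 2) * ((p₁ : ℝ) * ((-2 * x₁ t * y₁ t)
            + 2 * (1 + y₁ t) ^ 1 * (x₁ t + (Γ t + 1) * y₁ t + Γ t + 1))
          + (p₂ : ℝ) * ((-2 * x₂ t * y₂ t)
            + 2 * (1 + y₂ t) ^ 1 * (x₂ t + (Γ t + 1) * y₂ t + Γ t + 1)))
          - (1 / 2) * (2 * (Γ t) ^ 1
            * (Γ t + (p₁ : ℝ) * (1 + y₁ t) ^ 2 + (p₂ : ℝ) * (1 + y₂ t) ^ 2))) t := by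
      exact ((((hx₁ t ht).add hq₁).const_mul ((p₁:ℝ))).add
        (((hx₂ t ht).add hq₂).const_mul ((p₂:ℝ)))).const_mul (1/2) |>.sub (hΓ2.const_mul (1/2))
    convert hsum using 1
    simp only [hJ]
    ring
  have hJlim : Filter.Tendsto J Filter.atTop (nhds 0) := by
    have h : Filter.Tendsto J Filter.atTop (nhds
        ((1 / 2) * ((p₁ : ℝ) * ((n - 1) + (1 + 0) ^ 2) + (p₂ : ℝ) * ((n - 1) + (1 + 0) ^ 2))
          - (1 / 2) * (-n) ^ 2)) := by
      exact (((hlim₁.add ((tendsto_const_nhds.add hlim₂).pow 2)).const_mul ((p₁:ℝ))).add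
        ((hlim₃.add ((tendsto_const_nhds.add hlim₄).pow 2)).const_mul ((p₂:ℝ)))).const_mul (1/2)
        |>.sub ((hlim₅.pow 2).const_mul (1/2))
    convert h using 2
    subst hn
    ring
  have hJ0 : ∀ t, 0 ≤ t → J t = 0 := decay_zero J hJderiv hJlim
  intro t ht
  exact ⟨hσ0 t ht, hJ0 t ht⟩
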